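/- arXiv:2105.06223 — 3 statements merged into one kernel-verified Lean document; each statement's English description precedes it below -/
import Mathlib

section
/- The real vector space W of rank-3 tensors t on ℝ⁴ satisfying t_{abc} = t_{bac}, Σ_{a,b} η^{ab} t_{abc} = 0 for every c, and t_{abc} + t_{bca} + t_{cab} = 0 for all a,b,c (the purely tensorial parts of torsion) has dimension 16. -/
/-- The null-frame Minkowski metric on `ℝ⁴` (indices 0,1,2,3 for 1,2,3,4). -/
noncomputable def eta : Fin 4 → Fin 4 → ℝ := fun a b =>
  if (a = 0 ∧ b = 1) ∨ (a = 1 ∧ b = 0) then -1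
  else if (a = 2 ∧ b = 2) ∨ (a = 3 ∧ b = 3) then 1 else 0

/-- The space `W` of purely tensorial parts of torsion: rank-3 tensors symmetric in the first two
slots, `η`-trace-free over the first two slots, and satisfying the cyclic identity. -/
noncomputable def Wspace : Submodule ℝ (Fin 4 → Fin 4 → Fin 4 → ℝ) where
  carrier := {t | (∀ a b c, t a b c = t b a c) ∧
    (∀ c, ∑ a, ∑ b, eta a b * t a b c = 0) ∧
    (∀ a b c, t a b c + t b c a + t c a b = 0)}
  add_mem' := by
    intro t s ht hs
    simp only [Set.mem_setOf_eq] at ht hs ⊢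
    refine ⟨?_, ?_, ?_⟩
    · intro a b c; simp only [Pi.add_apply, ht.1 a b c, hs.1 a b c]
    · intro c
      simp only [Pi.add_apply, mul_add, Finset.sum_add_distrib]
      rw [ht.2.1 c, hs.2.1 c]; norm_num
    · intro a b c
      simp only [Pi.add_apply]
      linear_combination ht.2.2 a b c + hs.2.2 a b c
  zero_mem' := by
    refine ⟨by intro a b c; simp, by intro c; simp, by intro a b c; simp⟩
  smul_mem' := by
    intro r t ht
    simp only [Set.mem_setOf_eq] at ht ⊢
    refine ⟨?_, ?_, ?_⟩
    · intro a b c; simp only [Pi.smul_apply, smul_eq_mul, ht.1 a b c]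
    · intro c
      have h : ∀ a b : Fin 4, eta a b * ((r • t) a b c) = r * (eta a b * t a b c) := by
        intro a b; simp only [Pi.smul_apply, smul_eq_mul]; ring
      simp_rw [h, ← Finset.mul_sum]
      rw [ht.2.1 c, mul_zero]
    · intro a b c
      simp only [Pi.smul_apply, smul_eq_mul]
      linear_combination r * ht.2.2 a b c



set_option maxHeartbeats 1600000 in
noncomputable def gmap (x0 : ℝ) (x1 : ℝ) (x2 : ℝ) (x3 : ℝ) (x4 : ℝ) (x5 : ℝ) (x6 : ℝ) (x7 : ℝ) (x8 : ℝ) (x9 : ℝ) (x10 : ℝ) (x11 : ℝ) (x12 : ℝ) (x13 : ℝ) (x14 : ℝ) (x15 : ℝ) : Fin 4 → Fin 4 → Fin 4 → ℝ :=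
  ![![![(0:ℝ), -x3 - x13, (-2) * x0, (-2) * x5], ![(1/2) * x3 + (1/2) * x13, (1/2) * x4 + (1/2) * x14, (1/2) * x15, -x12], ![x0, -x1 + (-1/2) * x15, (-1/2) * x3, -x6 - x10], ![x5, -x7 + x12, x6, (-1/2) * x13]], ![![(1/2) * x3 + (1/2) * x13, (1/2) * x4 + (1/2) * x14, (1/2) * x15, -x12], ![-x4 - x14, (0:ℝ), (-2) * x2, (-2) * x8], ![x1, x2, (-1/2) * x4, -x9 - x11], ![x7, x8, x9, (-1/2) * x14]], ![![x0, -x1 + (-1/2) * x15, (-1/2) * x3, -x6 - x10], ![x1, x2, (-1/2) * x4, -x9 - x11], ![x3, x4, (0:ℝ), (-2) * x12], ![x10, x11, x12, (-1/2) * x15]], ![![x5, -x7 + x12, x6, (-1/2) * x13], ![x7, x8, x9, (-1/2) * x14], ![x10, x11, x12, (-1/2) * x15], ![x13, x14, x15, (0:ℝ)]]]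

set_option maxHeartbeats 1600000 in
lemma gmap_mem (x0 : ℝ) (x1 : ℝ) (x2 : ℝ) (x3 : ℝ) (x4 : ℝ) (x5 : ℝ) (x6 : ℝ) (x7 : ℝ) (x8 : ℝ) (x9 : ℝ) (x10 : ℝ) (x11 : ℝ) (x12 : ℝ) (x13 : ℝ) (x14 : ℝ) (x15 : ℝ) : gmap x0 x1 x2 x3 x4 x5 x6 x7 x8 x9 x10 x11 x12 x13 x14 x15 ∈ Wspace := by
  refine ⟨?_, ?_, ?_⟩
  · intro a b c
    fin_cases a <;> fin_cases b <;> fin_cases c <;> simp [gmap] <;> ring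
  · intro c
    fin_cases c <;> simp [Fin.sum_univ_four, eta, gmap] <;> ring
  · intro a b c
    fin_cases a <;> fin_cases b <;> fin_cases c <;> simp [gmap] <;> ring

set_option maxHeartbeats 1600000 in
noncomputable def Wequiv : Wspace ≃ₗ[ℝ] (Fin 16 → ℝ) where
  toFun t := ![t.1 2 0 0, t.1 2 1 0, t.1 2 1 1, t.1 2 2 0, t.1 2 2 1, t.1 3 0 0, t.1 3 0 2, t.1 3 1 0, t.1 3 1 1, t.1 3 1 2, t.1 3 2 0, t.1 3 2 1, t.1 3 2 2, t.1 3 3 0, t.1 3 3 1, t.1 3 3 2]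
  map_add' t s := by funext i; fin_cases i <;> rfl
  map_smul' r t := by funext i; fin_cases i <;> rfl
  invFun v := ⟨gmap (v 0) (v 1) (v 2) (v 3) (v 4) (v 5) (v 6) (v 7) (v 8) (v 9) (v 10) (v 11) (v 12) (v 13) (v 14) (v 15), gmap_mem (v 0) (v 1) (v 2) (v 3) (v 4) (v 5) (v 6) (v 7) (v 8) (v 9) (v 10) (v 11) (v 12) (v 13) (v 14) (v 15)⟩
  right_inv v := by funext i; fin_cases i <;> rfl
  left_inv t := by
    obtain ⟨u, hs, htr, hc⟩ := t
    have hT : ∀ c, u 0 1 c + u 1 0 c - u 2 2 c - u 3 3 c = 0 := by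
      intro c
      have h := htr c
      simp [Fin.sum_univ_four, eta] at h
      linarith
    refine Subtype.ext (funext fun a => funext fun b => funext fun c => ?_)
    show gmap (u 2 0 0) (u 2 1 0) (u 2 1 1) (u 2 2 0) (u 2 2 1) (u 3 0 0) (u 3 0 2) (u 3 1 0) (u 3 1 1) (u 3 1 2) (u 3 2 0) (u 3 2 1) (u 3 2 2) (u 3 3 0) (u 3 3 1) (u 3 3 2) a b c = u a b c
    fin_cases a <;> fin_cases b <;> fin_cases c
    · simp [gmap]
      linear_combination (-1/3) * hc 0 0 0
    · simp [gmap]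
      linear_combination hT 0 - hc 0 0 1
    · simp [gmap]
      linear_combination hs 0 2 0 - hc 0 0 2
    · simp [gmap]
      linear_combination hs 0 3 0 - hc 0 0 3
    · simp [gmap]
      linear_combination (-1/2) * hs 0 1 0 + (-1/2) * hT 0
    · simp [gmap]
      linear_combination (-1/2) * hs 0 1 1 + (-1/2) * hT 1
    · simp [gmap]
      linear_combination (-1/2) * hs 0 1 2 + (-1/2) * hT 2 + (-1/6) * hc 2 2 2
    · simp [gmap]
      linear_combination (-1/2) * hs 0 1 3 + (1/2) * hs 2 3 2 + (-1/2) * hT 3 + (-1/2) * hc 2 2 3 + (-1/6) * hc 3 3 3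
    · simp [gmap]
      linear_combination -hs 0 2 0
    · simp [gmap]
      linear_combination (1/2) * hs 0 1 2 - hs 0 2 1 + hs 1 2 0 + (1/2) * hT 2 - hc 0 1 2 + (1/6) * hc 2 2 2
    · simp [gmap]
      linear_combination (-1/2) * hs 0 2 2 + (-1/2) * hc 0 2 2
    · simp [gmap]
      linear_combination hs 2 3 0 - hc 0 2 3
    · simp [gmap]
      linear_combination -hs 0 3 0
    · simp [gmap]
      linear_combination (1/2) * hs 0 1 3 - hs 0 3 1 + hs 1 3 0 + (-1/2) * hs 2 3 2 + (1/2) * hT 3 - hc 0 1 3 + (1/2) * hc 2 2 3 + (1/6) * hc 3 3 3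
    · simp [gmap]
      linear_combination -hs 0 3 2
    · simp [gmap]
      linear_combination (-1/2) * hs 0 3 3 + (-1/2) * hc 0 3 3
    · simp [gmap]
      linear_combination (1/2) * hs 0 1 0 + (-1/2) * hT 0
    · simp [gmap]
      linear_combination (1/2) * hs 0 1 1 + (-1/2) * hT 1
    · simp [gmap]
      linear_combination (1/2) * hs 0 1 2 + (-1/2) * hT 2 + (-1/6) * hc 2 2 2
    · simp [gmap]
      linear_combination (1/2) * hs 0 1 3 + (1/2) * hs 2 3 2 + (-1/2) * hT 3 + (-1/2) * hc 2 2 3 + (-1/6) * hc 3 3 3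
    · simp [gmap]
      linear_combination hT 1 - hc 0 1 1
    · simp [gmap]
      linear_combination (-1/3) * hc 1 1 1
    · simp [gmap]
      linear_combination hs 1 2 1 - hc 1 1 2
    · simp [gmap]
      linear_combination hs 1 3 1 - hc 1 1 3
    · simp [gmap]
      linear_combination -hs 1 2 0
    · simp [gmap]
      linear_combination -hs 1 2 1
    · simp [gmap]
      linear_combination (-1/2) * hs 1 2 2 + (-1/2) * hc 1 2 2
    · simp [gmap]
      linear_combination hs 2 3 1 - hc 1 2 3
    · simp [gmap]
      linear_combination -hs 1 3 0
    · simp [gmap]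
      linear_combination -hs 1 3 1
    · simp [gmap]
      linear_combination -hs 1 3 2
    · simp [gmap]
      linear_combination (-1/2) * hs 1 3 3 + (-1/2) * hc 1 3 3
    · rfl
    · simp [gmap]
      linear_combination (1/2) * hs 0 1 2 + hs 1 2 0 + (1/2) * hT 2 - hc 0 1 2 + (1/6) * hc 2 2 2
    · simp [gmap]
      linear_combination (1/2) * hs 0 2 2 + (-1/2) * hc 0 2 2
    · simp [gmap]
      linear_combination hs 0 2 3 + hs 2 3 0 - hc 0 2 3
    · rfl
    · rfl
    · simp [gmap]
      linear_combination (1/2) * hs 1 2 2 + (-1/2) * hc 1 2 2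
    · simp [gmap]
      linear_combination hs 1 2 3 + hs 2 3 1 - hc 1 2 3
    · rfl
    · rfl
    · simp [gmap]
      linear_combination (-1/3) * hc 2 2 2
    · simp [gmap]
      linear_combination hs 2 3 2 - hc 2 2 3
    · simp [gmap]
      linear_combination -hs 2 3 0
    · simp [gmap]
      linear_combination -hs 2 3 1
    · simp [gmap]
      linear_combination -hs 2 3 2
    · simp [gmap]
      linear_combination (-1/2) * hs 2 3 3 + (-1/2) * hc 2 3 3
    · rfl
    · simp [gmap]
      linear_combination (1/2) * hs 0 1 3 + hs 1 3 0 + (-1/2) * hs 2 3 2 + (1/2) * hT 3 - hc 0 1 3 + (1/2) * hc 2 2 3 + (1/6) * hc 3 3 3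
    · rfl
    · simp [gmap]
      linear_combination (1/2) * hs 0 3 3 + (-1/2) * hc 0 3 3
    · rfl
    · rfl
    · rfl
    · simp [gmap]
      linear_combination (1/2) * hs 1 3 3 + (-1/2) * hc 1 3 3
    · rfl
    · rfl
    · rfl
    · simp [gmap]
      linear_combination (1/2) * hs 2 3 3 + (-1/2) * hc 2 3 3
    · rfl
    · rfl
    · rfl
    · simp [gmap]
      linear_combination (-1/3) * hc 3 3 3

/-- the space of purely tensorial parts of torsion has dimension 16. -/
theorem Wspace_finrank : Module.finrank ℝ Wspace = 16 := by
  rw [Wequiv.finrank_eq]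
  simp [Module.finrank_pi]
end

section
/- If a torsion-type tensor T is of alignment type II (all components of positive boost weight vanish relative to some null frame), then its vector part V and axial part A are not timelike: Σ_{a,b} η^{ab} V_a V_b ≥ 0 and Σ_{a,b} η_{ab} A_a A_b ≥ 0, i.e. V and A are each spacelike, null, or zero. -/
/-- The totally antisymmetric symbol with `eps 0 1 2 3 = 1`. -/
noncomputable def eps (a b c d : Fin 4) : ℝ :=
  ∑ σ : Equiv.Perm (Fin 4),
    if σ 0 = a ∧ σ 1 = b ∧ σ 2 = c ∧ σ 3 = d then ((Equiv.Perm.sign σ : ℤ) : ℝ) else 0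

/-- Membership in the space `W` of purely tensorial parts of torsion. -/
def InW (t : Fin 4 → Fin 4 → Fin 4 → ℝ) : Prop :=
  (∀ a b c, t a b c = t b a c) ∧
  (∀ c, ∑ a, ∑ b, eta a b * t a b c = 0) ∧
  (∀ a b c, t a b c + t b c a + t c a b = 0)

/-- The decomposition formula `T_{abc} = (2/3)(t_{abc} − t_{acb}) − (1/3)(η_{ab}V_c − η_{ac}V_b)
  + Σ_d ε_{abcd} A_d`. -/
noncomputable def decomp (V A : Fin 4 → ℝ) (t : Fin 4 → Fin 4 → Fin 4 → ℝ) (a b c : Fin 4) : ℝ :=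
  (2/3) * (t a b c - t a c b) - (1/3) * (eta a b * V c - eta a c * V b) + ∑ d, eps a b c d * A d


/-- The boost weight of a single index: `+1` for frame index 1 (here 0), `−1` for frame index 2
(here 1), `0` otherwise. -/
def bwIdx (a : Fin 4) : ℤ := if a = 0 then 1 else if a = 1 then -1 else 0

/-- The boost weight of a rank-3 component. -/
def bw3 (a b c : Fin 4) : ℤ := bwIdx a + bwIdx b + bwIdx c


def sigC : Equiv.Perm (Fin 4) := ⟨![0,2,3,1], ![0,3,1,2], by decide, by decide⟩

lemma eps0231 : eps 0 2 3 1 = 1 := by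
  unfold eps
  rw [Finset.sum_eq_single sigC]
  · rw [if_pos (by decide)]
    norm_num [show Equiv.Perm.sign sigC = 1 by decide]
  · intro τ _ hτ
    rw [if_neg]
    rintro ⟨h0, h1, h2, h3⟩
    exact hτ (by ext x; fin_cases x <;> simp_all [sigC])
  · simp

lemma eps_zero_of (a b c d : Fin 4) (h : a = d ∨ b = d ∨ c = d) : eps a b c d = 0 := by
  unfold eps
  apply Finset.sum_eq_zero
  intro σ _
  rw [if_neg]
  rintro ⟨h0, h1, h2, h3⟩
  rcases h with h | h | h
  · exact absurd (σ.injective (h0.trans (h ▸ h3.symm))) (by decide)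
  · exact absurd (σ.injective (h1.trans (h ▸ h3.symm))) (by decide)
  · exact absurd (σ.injective (h2.trans (h ▸ h3.symm))) (by decide)

/-- if a torsion-type tensor is of alignment type II, then its vector part and its
axial part are not timelike (each is spacelike, null, or zero). -/
theorem typeII_vector_axial_not_timelike
    (T : Fin 4 → Fin 4 → Fin 4 → ℝ) (hT : ∀ a b c, T a b c = - T a c b)
    (hII : ∀ a b c, 0 < bw3 a b c → T a b c = 0)
    (V : Fin 4 → ℝ) (hV : ∀ a, V a = ∑ b, ∑ c, eta b c * T b a c)
    (A : Fin 4 → ℝ)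
    (hA : ∀ a b c, (∑ d, eps a b c d * A d) =
      (1/6) * (T a b c + T b c a + T c a b - T a c b - T b a c - T c b a)) :
    0 ≤ (∑ a, ∑ b, eta a b * V a * V b) ∧ 0 ≤ (∑ a, ∑ b, eta a b * A a * A b) := by
  have hV0 : V 0 = 0 := by
    have h := hV 0
    simp only [Fin.sum_univ_four, eta] at h
    simp only [show ((0:Fin 4) = 1) = False by decide, show ((1:Fin 4) = 0) = False by decide,
      show ((2:Fin 4) = 2) = True by decide, show ((3:Fin 4) = 3) = True by decide,
      show ((0:Fin 4) = 0) = True by decide, show ((1:Fin 4) = 1) = True by decide,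
      show ((0:Fin 4) = 2) = False by decide, show ((0:Fin 4) = 3) = False by decide,
      show ((1:Fin 4) = 2) = False by decide, show ((1:Fin 4) = 3) = False by decide,
      show ((2:Fin 4) = 0) = False by decide, show ((2:Fin 4) = 1) = False by decide,
      show ((2:Fin 4) = 3) = False by decide, show ((3:Fin 4) = 0) = False by decide,
      show ((3:Fin 4) = 1) = False by decide, show ((3:Fin 4) = 2) = False by decide,
      true_and, and_true, false_and, and_false, true_or, or_true, false_or, or_false,
      if_true, if_false] at h
    norm_num at h
    rw [hII 0 0 1 (by decide), hII 1 0 0 (by decide), hII 2 0 2 (by decide),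
      hII 3 0 3 (by decide)] at h
    linarith
  have hA1 : A 1 = 0 := by
    have h := hA 0 2 3
    rw [Fin.sum_univ_four, eps0231,
      show eps 0 2 3 0 = 0 from eps_zero_of _ _ _ _ (Or.inl rfl),
      show eps 0 2 3 2 = 0 from eps_zero_of _ _ _ _ (Or.inr (Or.inl rfl)),
      show eps 0 2 3 3 = 0 from eps_zero_of _ _ _ _ (Or.inr (Or.inr rfl)),
      hII 0 2 3 (by decide), hII 2 3 0 (by decide), hII 3 0 2 (by decide),
      hII 0 3 2 (by decide), hII 2 0 3 (by decide), hII 3 2 0 (by decide)] at h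
    linarith
  constructor
  · simp only [Fin.sum_univ_four, eta]
    norm_num [show ((0:Fin 4) = 3) = False by decide,
      show ((1:Fin 4) = 3) = False by decide, show ((2:Fin 4) = 3) = False by decide,
      show ((3:Fin 4) = 0) = False by decide, show ((3:Fin 4) = 1) = False by decide,
      show ((3:Fin 4) = 2) = False by decide, show ((1:Fin 4) = 2) = False by decide,
      show ((2:Fin 4) = 1) = False by decide, show ((2:Fin 4) = 0) = False by decide,
      show ((0:Fin 4) = 2) = False by decide, show ((0:Fin 4) = 1) = False by decide,
      show ((1:Fin 4) = 0) = False by decide, hV0]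
    nlinarith [sq_nonneg (V 2), sq_nonneg (V 3), sq_nonneg (V 2 + V 3)]
  · simp only [Fin.sum_univ_four, eta]
    norm_num [show ((0:Fin 4) = 3) = False by decide,
      show ((1:Fin 4) = 3) = False by decide, show ((2:Fin 4) = 3) = False by decide,
      show ((3:Fin 4) = 0) = False by decide, show ((3:Fin 4) = 1) = False by decide,
      show ((3:Fin 4) = 2) = False by decide, show ((1:Fin 4) = 2) = False by decide,
      show ((2:Fin 4) = 1) = False by decide, show ((2:Fin 4) = 0) = False by decide,
      show ((0:Fin 4) = 2) = False by decide, show ((0:Fin 4) = 1) = False by decide,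
      show ((1:Fin 4) = 0) = False by decide, hA1]
    nlinarith [sq_nonneg (A 2), sq_nonneg (A 3), sq_nonneg (A 2 + A 3)]
end

section
/- Tensors of alignment type II are not distinguished from their boost-weight-zero parts by any scalar polynomial invariant: let T₁,…,T_k be tensors on ℝ⁴ (of ranks r₁,…,r_k) such that every component of positive boost weight of each T_m vanishes, and let (T_m)₀ denote the tensor obtained from T_m by keeping exactly its boost-weight-zero components and setting all others to zero. Then for every perfect pairing p, the full contraction of (T₁,…,T_k) equals the full contraction of ((T₁)₀,…,(T_k)₀). -/
/-- The boost weight of a rank-`r` component index: the number of indices equal to 1 (here 0)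
minus the number of indices equal to 2 (here 1). -/
def bw {r : ℕ} (a : Fin r → Fin 4) : ℤ :=
  ((Finset.univ.filter fun i => a i = 0).card : ℤ) -
    ((Finset.univ.filter fun i => a i = 1).card : ℤ)

/-- The combined index slots of a list of tensors of ranks `r 0, …, r (k-1)`. -/
abbrev Slots {k : ℕ} (r : Fin k → ℕ) : Type := (m : Fin k) × Fin (r m)

/-- The full contraction of the tensors `T m` determined by a pairing of the combined index
slots.  The pairing is encoded by a fixed-point-free involution `p` together with a set `S` of
representatives containing exactly one slot from each pair `{i, p i}`; each pair contributes one
factor of the inverse metric `η`. -/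
noncomputable def contraction {k : ℕ} (r : Fin k → ℕ) (T : ∀ m, (Fin (r m) → Fin 4) → ℝ)
    (p : Slots r → Slots r) (S : Finset (Slots r)) : ℝ :=
  ∑ f : Slots r → Fin 4,
    (∏ i ∈ S, eta (f i) (f (p i))) * ∏ m, T m (fun j => f ⟨m, j⟩)


private def w : Fin 4 → ℤ := fun a => if a = 0 then 1 else if a = 1 then -1 else 0

private lemma eta_w {a b : Fin 4} (h : eta a b ≠ 0) : w a + w b = 0 := by
  fin_cases a <;> fin_cases b <;> simp_all [eta, w]

private lemma bw_eq_sum {r : ℕ} (a : Fin r → Fin 4) : bw a = ∑ i, w (a i) := by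
  unfold bw w
  rw [← Finset.sum_boole, ← Finset.sum_boole, ← Finset.sum_sub_distrib]
  apply Finset.sum_congr rfl
  intro i _
  split_ifs <;> simp_all

/-- tensors of alignment type II are not distinguished from their boost-weight-zero
parts by any full contraction: if every positive boost weight component of each `T m` vanishes,
then every full contraction of the `T m` equals the corresponding full contraction of their
boost-weight-zero truncations. -/
theorem contraction_typeII_eq_bw_zero_part
    {k : ℕ} (r : Fin k → ℕ) (T : ∀ m, (Fin (r m) → Fin 4) → ℝ)
    (hII : ∀ m a, 0 < bw a → T m a = 0)
    (p : Slots r → Slots r) (S : Finset (Slots r))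
    (hp : p ∘ p = id) (hfp : ∀ i, p i ≠ i) (hS : ∀ i, i ∈ S ↔ p i ∉ S) :
    contraction r T p S =
      contraction r (fun m a => if bw a = 0 then T m a else 0) p S := by
  unfold contraction
  apply Finset.sum_congr rfl
  intro f _
  by_cases hη : (∏ i ∈ S, eta (f i) (f (p i))) = 0
  · rw [hη, zero_mul, zero_mul]
  congr 1
  have hpp : ∀ x, p (p x) = x := fun x => congrFun hp x
  have hpinj : Function.Injective p := fun x y h => by
    rw [← hpp x, h, hpp]
  have himg : Finset.image p S = Sᶜ := by
    ext j
    simp only [Finset.mem_image, Finset.mem_compl]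
    constructor
    · rintro ⟨i, hi, rfl⟩
      exact (hS i).mp hi
    · intro hj
      exact ⟨p j, by rw [hS (p j), hpp]; exact hj, hpp j⟩
  have hη' : ∀ i ∈ S, eta (f i) (f (p i)) ≠ 0 := by
    intro i hi
    exact Finset.prod_ne_zero_iff.mp hη i hi
  have hsum0 : ∑ i : Slots r, w (f i) = 0 := by
    rw [← Finset.sum_add_sum_compl S, ← himg, Finset.sum_image (fun x hx y hy h => hpinj h),
      ← Finset.sum_add_distrib]
    exact Finset.sum_eq_zero fun i hi => eta_w (hη' i hi)
  have hsum : ∑ m, bw (fun j => f ⟨m, j⟩) = 0 := by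
    simp only [bw_eq_sum]
    rw [← hsum0, Finset.sum_sigma']
    rfl
  by_cases hall : ∀ m, bw (fun j => f ⟨m, j⟩) = 0
  · refine Finset.prod_congr rfl fun m _ => ?_
    simp [hall m]
  · push_neg at hall
    obtain ⟨m0, hm0⟩ := hall
    have hex : ∃ m, 0 < bw (fun j => f ⟨m, j⟩) := by
      by_contra h
      push_neg at h
      have : ∑ m, bw (fun j => f ⟨m, j⟩) < ∑ _m : Fin k, (0 : ℤ) :=
        Finset.sum_lt_sum (fun i _ => h i) ⟨m0, Finset.mem_univ m0, lt_of_le_of_ne (h m0) hm0⟩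
      simp [hsum] at this
    obtain ⟨m1, hm1⟩ := hex
    rw [Finset.prod_eq_zero (Finset.mem_univ m1) (hII m1 _ hm1)]
    exact (Finset.prod_eq_zero (Finset.mem_univ m1) (by simp [hm1.ne'])).symm
end
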